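/- In the game F-Wythoff, the set of positions with Sprague-Grundy value 2 is exactly {(0,2), (1,3)} ∪ {(⌊φn⌋+4, ⌊φ²n⌋+4) : n ≥ 0} (pairs unordered), where φ = (1+√5)/2. -/

import Mathlib

noncomputable def phi : ℝ := (1 + Real.sqrt 5) / 2

noncomputable def fl (n : ℕ) : ℕ := ⌊phi * n⌋₊

noncomputable def fl2 (n : ℕ) : ℕ := ⌊phi ^ 2 * n⌋₊

def FMove (p q : ℕ × ℕ) : Prop :=
  ∃ a b x y : ℕ, a ≤ b ∧ x ≤ y ∧ (p = (a, b) ∨ p = (b, a)) ∧ (q = (x, y) ∨ q = (y, x)) ∧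
    ((x = a ∧ y < b) ∨ (x < a ∧ y = b) ∨ (x < a ∧ y = a) ∨
      (∃ k, 1 ≤ k ∧ k < a ∧ (b - k) / (a - k) = b / a ∧ x = a - k ∧ y = b - k))

theorem fMove_lt {p q : ℕ × ℕ} (h : FMove p q) : q.1 + q.2 < p.1 + p.2 := by
  obtain ⟨a, b, x, y, hab, hxy, hp, hq, hc⟩ := h
  have hps : p.1 + p.2 = a + b := by rcases hp with h | h <;> subst h <;> simp <;> omega
  have hqs : q.1 + q.2 = x + y := by rcases hq with h | h <;> subst h <;> simp <;> omega
  rw [hps, hqs]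
  rcases hc with ⟨h1, h2⟩ | ⟨h1, h2⟩ | ⟨h1, h2⟩ | ⟨k, hk1, hk2, _, h1, h2⟩ <;> omega

def PPos (p : ℕ × ℕ) : Prop := ∀ q, FMove p q → ¬ PPos q
termination_by p.1 + p.2
decreasing_by exact fMove_lt (by assumption)

noncomputable def grundy (p : ℕ × ℕ) : ℕ :=
  sInf {g : ℕ | ∀ q, FMove p q → grundy q ≠ g}
termination_by p.1 + p.2
decreasing_by exact fMove_lt (by assumption)

/- ## Number-theoretic layer -/

open goldenRatio in
lemma phi_eq : phi = Real.goldenRatio := rfl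

lemma one_lt_phi : 1 < phi := by rw [phi_eq]; exact Real.one_lt_goldenRatio
lemma phi_lt_two : phi < 2 := by rw [phi_eq]; exact Real.goldenRatio_lt_two
lemma phi_pos : 0 < phi := lt_trans one_pos one_lt_phi
lemma phi_sq : phi ^ 2 = phi + 1 := by rw [phi_eq]; exact Real.goldenRatio_sq
lemma phi_irr : Irrational phi := by rw [phi_eq]; exact Real.goldenRatio_irrational

lemma phi_conj : phi.HolderConjugate (phi ^ 2) := by
  rw [Real.holderConjugate_iff]
  constructor
  · exact one_lt_phi
  · rw [phi_sq]
    have h := phi_pos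
    field_simp
    nlinarith [phi_sq]

lemma fl2_eq (n : ℕ) : fl2 n = fl n + n := by
  unfold fl fl2
  rw [phi_sq, add_mul, one_mul]
  rw [Nat.floor_add_natCast (mul_nonneg phi_pos.le (Nat.cast_nonneg _))]

lemma fl_ge (n : ℕ) : n ≤ fl n := by
  unfold fl
  refine Nat.le_floor ?_
  calc (n:ℝ) = 1 * n := (one_mul _).symm
  _ ≤ phi * n := mul_le_mul_of_nonneg_right one_lt_phi.le (Nat.cast_nonneg _)

lemma fl_strictMono : StrictMono fl := by
  refine strictMono_nat_of_lt_succ fun n => ?_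
  unfold fl
  have : (⌊phi * n⌋₊ + 1 : ℝ) ≤ phi * (n+1) := by
    push_cast
    have := Nat.floor_le (a := phi * n) (mul_nonneg phi_pos.le (Nat.cast_nonneg _))
    nlinarith [one_lt_phi]
  have := Nat.le_floor (n := ⌊phi * n⌋₊ + 1) (by exact_mod_cast this)
  push_cast at this ⊢
  omega

lemma fl_zero : fl 0 = 0 := by
  unfold fl; norm_num

lemma fl2_strictMono : StrictMono fl2 := by
  intro m n h
  have := fl2_eq m; have := fl2_eq n
  have := fl_strictMono h
  omega

lemma fl_one : fl 1 = 1 := by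
  unfold fl
  rw [Nat.cast_one, mul_one]
  rw [Nat.floor_eq_iff phi_pos.le]
  push_cast
  constructor
  · exact one_lt_phi.le
  · calc phi < 2 := phi_lt_two
      _ = 1 + 1 := by norm_num

lemma beatty_fl (m : ℕ) : beattySeq phi m = (fl m : ℤ) := by
  unfold beattySeq fl
  rw [mul_comm]
  rw [Int.natCast_floor_eq_floor (mul_nonneg (by nlinarith [phi_pos]) (Nat.cast_nonneg _))]
  norm_num

lemma beatty_fl2 (m : ℕ) : beattySeq (phi^2) m = (fl2 m : ℤ) := by
  unfold beattySeq fl2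
  rw [mul_comm]
  rw [Int.natCast_floor_eq_floor (mul_nonneg (by nlinarith [phi_pos]) (Nat.cast_nonneg _))]
  norm_num

lemma fl_cover {c : ℕ} (hc : 1 ≤ c) : ∃ m, 1 ≤ m ∧ (c = fl m ∨ c = fl2 m) := by
  have h := phi_irr.beattySeq_symmDiff_beattySeq_pos phi_conj
  have hmem : (c:ℤ) ∈ {n : ℤ | 0 < n} := by simp; exact_mod_cast hc
  rw [← h] at hmem
  rcases hmem with ⟨⟨k, hk, hke⟩, -⟩ | ⟨⟨k, hk, hke⟩, -⟩
  · lift k to ℕ using hk.le with m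
    refine ⟨m, by exact_mod_cast hk, Or.inl ?_⟩
    rw [beatty_fl] at hke; exact_mod_cast hke.symm
  · lift k to ℕ using hk.le with m
    refine ⟨m, by exact_mod_cast hk, Or.inr ?_⟩
    rw [beatty_fl2] at hke; exact_mod_cast hke.symm

lemma fl_disj {n m : ℕ} (hn : 1 ≤ n) (hm : 1 ≤ m) : fl n ≠ fl2 m := by
  intro he
  have h := phi_irr.beattySeq_symmDiff_beattySeq_pos phi_conj
  have h1 : (fl n : ℤ) ∈ {x : ℤ | ∃ k > 0, beattySeq phi k = x} :=
    ⟨n, by exact_mod_cast hn, beatty_fl n⟩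
  have h2 : (fl n : ℤ) ∈ {x : ℤ | ∃ k > 0, beattySeq (phi^2) k = x} :=
    ⟨m, by exact_mod_cast hm, by rw [beatty_fl2]; exact_mod_cast he.symm⟩
  have h3 : (fl n : ℤ) ∈ {x : ℤ | 0 < x} := by
    have := fl_ge n
    simp only [Set.mem_setOf_eq]
    exact_mod_cast lt_of_lt_of_le hn (le_trans (fl_ge n) le_rfl)
  rw [← h, Set.mem_symmDiff] at h3
  tauto

/- ## Combinatorial layer -/

def TT (c : ℕ) (x y : ℕ) : Prop := ∃ n, x = fl n + c ∧ y = fl2 n + c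

def m0 (x y : ℕ) : Prop := (x = 0 ∧ y = 0) ∨ TT 1 x y
def m1 (x y : ℕ) : Prop := (x = 0 ∧ y = 1) ∨ TT 2 x y
def m2 (x y : ℕ) : Prop := (x = 0 ∧ y = 2) ∨ (x = 1 ∧ y = 3) ∨ TT 4 x y

lemma TT_le {c x y : ℕ} (h : TT c x y) : c ≤ x ∧ x ≤ y := by
  obtain ⟨n, rfl, rfl⟩ := h
  have := fl2_eq n
  omega

lemma m0_le {a b : ℕ} (h : m0 a b) : a ≤ b := by
  rcases h with ⟨rfl, rfl⟩ | h
  · omega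
  · exact (TT_le h).2

lemma m1_le {a b : ℕ} (h : m1 a b) : a ≤ b := by
  rcases h with ⟨rfl, rfl⟩ | h
  · omega
  · exact (TT_le h).2

lemma m2_le {a b : ℕ} (h : m2 a b) : a ≤ b := by
  rcases h with ⟨rfl, rfl⟩ | ⟨rfl, rfl⟩ | h
  · omega
  · omega
  · exact (TT_le h).2

-- move constructors
lemma mv1 {a b y : ℕ} (h1 : a ≤ y) (h2 : y < b) : FMove (a,b) (a,y) :=
  ⟨a, b, a, y, by omega, h1, Or.inl rfl, Or.inl rfl, Or.inl ⟨rfl, h2⟩⟩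

lemma mv2 {a b x : ℕ} (hab : a ≤ b) (h : x < a) : FMove (a,b) (x,b) :=
  ⟨a, b, x, b, hab, by omega, Or.inl rfl, Or.inl rfl, Or.inr (Or.inl ⟨h, rfl⟩)⟩

lemma mv3 {a b x : ℕ} (hab : a ≤ b) (h : x < a) : FMove (a,b) (x,a) :=
  ⟨a, b, x, a, hab, by omega, Or.inl rfl, Or.inl rfl, Or.inr (Or.inr (Or.inl ⟨h, rfl⟩))⟩

lemma mvD {a b k : ℕ} (hab : a ≤ b) (h1 : 1 ≤ k) (h2 : k < a)
    (h3 : (b - k) / (a - k) = b / a) : FMove (a,b) (a-k, b-k) :=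
  ⟨a, b, a-k, b-k, hab, by omega, Or.inl rfl, Or.inl rfl,
    Or.inr (Or.inr (Or.inr ⟨k, h1, h2, h3, rfl, rfl⟩))⟩

lemma fmove_cases {a b x y : ℕ} (hab : a ≤ b) (hxy : x ≤ y) (h : FMove (a,b) (x,y)) :
    (x = a ∧ y < b) ∨ (x < a ∧ y = b) ∨ (x < a ∧ y = a) ∨
      (∃ k, 1 ≤ k ∧ k < a ∧ (b - k) / (a - k) = b / a ∧ x = a - k ∧ y = b - k) := by
  obtain ⟨a', b', x', y', hab', hxy', hp, hq, hc⟩ := h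
  have hA : a' = a ∧ b' = b := by
    rcases hp with h | h <;> (rw [Prod.ext_iff] at h; simp at h; omega)
  have hX : x' = x ∧ y' = y := by
    rcases hq with h | h <;> (rw [Prod.ext_iff] at h; simp at h; omega)
  obtain ⟨rfl, rfl⟩ := hA
  obtain ⟨rfl, rfl⟩ := hX
  exact hc

lemma div_one_of {a b : ℕ} (h1 : a ≤ b) (h2 : b < 2*a) : b / a = 1 :=
  Nat.div_eq_of_lt_le (by omega) (by omega)

lemma tail_noMove {c : ℕ} (hc : 1 ≤ c) {n x y : ℕ} (hxy : x ≤ y)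
    (h : FMove (fl n + c, fl2 n + c) (x, y)) : ¬ TT c x y := by
  rintro ⟨m, rfl, rfl⟩
  have hab : fl n + c ≤ fl2 n + c := by have := fl2_eq n; omega
  rcases fmove_cases hab hxy h with ⟨h1, h2⟩ | ⟨h1, h2⟩ | ⟨h1, h2⟩ | ⟨k, hk1, hk2, hk3, hk4, hk5⟩
  · have hmn : m = n := fl_strictMono.injective (by omega)
    subst hmn; omega
  · have hmn : m = n := fl2_strictMono.injective (by omega)
    subst hmn; omega
  · -- x < a, y = a : fl n = fl2 m
    have hm1 : 1 ≤ m := by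
      by_contra hm
      have : m = 0 := by omega
      subst this
      have := fl2_eq 0; have := fl_zero
      omega
    have hn1 : 1 ≤ n := by
      by_contra hn
      have : n = 0 := by omega
      subst this
      have := fl_zero
      have := fl2_eq m; have := fl_ge m
      omega
    exact fl_disj hn1 hm1 (by omega)
  · have hmn : m = n := by
      have := fl2_eq m; have := fl2_eq n
      omega
    subst hmn; omega

lemma exists_tail {c : ℕ} (hc : 1 ≤ c) {a b m : ℕ} (hab : a ≤ b) (hm : 1 ≤ m)
    (hrep : a = fl m + c ∨ a = fl2 m + c) (hne : ¬ TT c a b) :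
    ∃ x y, x ≤ y ∧ FMove (a,b) (x,y) ∧ TT c x y := by
  have hfl2m := fl2_eq m
  have hflgem := fl_ge m
  rcases hrep with rfl | rfl
  · rcases lt_trichotomy (b - (fl m + c)) m with hd | hd | hd
    · -- diagonal move to (fl d + c, fl2 d + c) where d = b - a
      set d := b - (fl m + c) with hdd
      have hfld : fl d < fl m := by
        rcases Nat.eq_zero_or_pos d with h0 | h0
        · rw [h0, fl_zero]; omega
        · exact fl_strictMono hd
      have hfl2d := fl2_eq d
      have hflged := fl_ge d
      set k := (fl m + c) - (fl d + c) with hkk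
      have hk1 : 1 ≤ k := by omega
      have hk2 : k < fl m + c := by omega
      have e1 : (fl m + c) - k = fl d + c := by omega
      have e2 : b - k = fl2 d + c := by omega
      have hdiv : (b - k) / ((fl m + c) - k) = b / (fl m + c) := by
        rw [e1, e2, div_one_of hab (by omega), div_one_of (by omega) (by omega)]
      have hmv := mvD hab hk1 hk2 hdiv
      rw [e1, e2] at hmv
      exact ⟨fl d + c, fl2 d + c, by omega, hmv, ⟨d, rfl, rfl⟩⟩
    · exact absurd ⟨m, rfl, by omega⟩ hne
    · refine ⟨fl m + c, fl2 m + c, by omega, mv1 (by omega) (by omega), ⟨m, rfl, rfl⟩⟩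
  · refine ⟨fl m + c, fl2 m + c, by omega, ?_, ⟨m, rfl, rfl⟩⟩
    have : fl m + c < fl2 m + c := by omega
    exact mv3 hab this

lemma noMove0 {a b x y : ℕ} (hab : a ≤ b) (hxy : x ≤ y) (hm : m0 a b)
    (h : FMove (a,b) (x,y)) : ¬ m0 x y := by
  rcases hm with ⟨rfl, rfl⟩ | ⟨n, rfl, rfl⟩
  · rcases fmove_cases hab hxy h with ⟨h1,h2⟩|⟨h1,h2⟩|⟨h1,h2⟩|⟨k,hk1,hk2,hk3,hk4,hk5⟩ <;> omega
  · rintro (⟨rfl, rfl⟩ | hT)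
    · rcases fmove_cases hab hxy h with ⟨h1,h2⟩|⟨h1,h2⟩|⟨h1,h2⟩|⟨k,hk1,hk2,hk3,hk4,hk5⟩ <;> omega
    · exact tail_noMove (by omega) hxy h hT

lemma noMove1 {a b x y : ℕ} (hab : a ≤ b) (hxy : x ≤ y) (hm : m1 a b)
    (h : FMove (a,b) (x,y)) : ¬ m1 x y := by
  rcases hm with ⟨rfl, rfl⟩ | ⟨n, rfl, rfl⟩
  · rintro (⟨rfl, rfl⟩ | hT)
    · rcases fmove_cases hab hxy h with ⟨h1,h2⟩|⟨h1,h2⟩|⟨h1,h2⟩|⟨k,hk1,hk2,hk3,hk4,hk5⟩ <;> omega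
    · have := TT_le hT
      rcases fmove_cases hab hxy h with ⟨h1,h2⟩|⟨h1,h2⟩|⟨h1,h2⟩|⟨k,hk1,hk2,hk3,hk4,hk5⟩ <;> omega
  · rintro (⟨rfl, rfl⟩ | hT)
    · have h2n := fl2_eq n
      rcases fmove_cases hab hxy h with ⟨h1,h2⟩|⟨h1,h2⟩|⟨h1,h2⟩|⟨k,hk1,hk2,hk3,hk4,hk5⟩ <;> omega
    · exact tail_noMove (by omega) hxy h hT

lemma noMove2 {a b x y : ℕ} (hab : a ≤ b) (hxy : x ≤ y) (hm : m2 a b)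
    (h : FMove (a,b) (x,y)) : ¬ m2 x y := by
  rcases hm with ⟨rfl, rfl⟩ | ⟨rfl, rfl⟩ | ⟨n, rfl, rfl⟩
  · rintro (⟨rfl, rfl⟩ | ⟨rfl, rfl⟩ | hT)
    · rcases fmove_cases hab hxy h with ⟨h1,h2⟩|⟨h1,h2⟩|⟨h1,h2⟩|⟨k,hk1,hk2,hk3,hk4,hk5⟩ <;> omega
    · rcases fmove_cases hab hxy h with ⟨h1,h2⟩|⟨h1,h2⟩|⟨h1,h2⟩|⟨k,hk1,hk2,hk3,hk4,hk5⟩ <;> omega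
    · have := TT_le hT
      rcases fmove_cases hab hxy h with ⟨h1,h2⟩|⟨h1,h2⟩|⟨h1,h2⟩|⟨k,hk1,hk2,hk3,hk4,hk5⟩ <;> omega
  · rintro (⟨rfl, rfl⟩ | ⟨rfl, rfl⟩ | hT)
    · rcases fmove_cases hab hxy h with ⟨h1,h2⟩|⟨h1,h2⟩|⟨h1,h2⟩|⟨k,hk1,hk2,hk3,hk4,hk5⟩ <;> omega
    · rcases fmove_cases hab hxy h with ⟨h1,h2⟩|⟨h1,h2⟩|⟨h1,h2⟩|⟨k,hk1,hk2,hk3,hk4,hk5⟩ <;> omega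
    · have := TT_le hT
      rcases fmove_cases hab hxy h with ⟨h1,h2⟩|⟨h1,h2⟩|⟨h1,h2⟩|⟨k,hk1,hk2,hk3,hk4,hk5⟩ <;> omega
  · have h2n := fl2_eq n
    rintro (⟨rfl, rfl⟩ | ⟨rfl, rfl⟩ | hT)
    · rcases fmove_cases hab hxy h with ⟨h1,h2⟩|⟨h1,h2⟩|⟨h1,h2⟩|⟨k,hk1,hk2,hk3,hk4,hk5⟩ <;> omega
    · rcases fmove_cases hab hxy h with ⟨h1,h2⟩|⟨h1,h2⟩|⟨h1,h2⟩|⟨k,hk1,hk2,hk3,hk4,hk5⟩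
      · omega
      · omega
      · omega
      · -- diagonal to (1,3): n = 2, contradiction with the division condition
        have hn2 : n = 2 := by omega
        subst hn2
        have hfl2 : 2 ≤ fl 2 := fl_ge 2
        have e1 : fl 2 + 4 - k = 1 := by omega
        have e2 : fl2 2 + 4 - k = 3 := by omega
        rw [e1, e2] at hk3
        rw [Nat.div_one] at hk3
        rw [div_one_of (by omega) (by omega)] at hk3
        omega
    · exact tail_noMove (by omega) hxy h hT

lemma exists0 {a b : ℕ} (hab : a ≤ b) (h : ¬ m0 a b) :
    ∃ x y, x ≤ y ∧ FMove (a,b) (x,y) ∧ m0 x y := by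
  have hfl0 := fl_zero
  have hfl20 := fl2_eq 0
  match a, hab with
  | 0, _ =>
    have hb : b ≠ 0 := fun hb => h (Or.inl ⟨rfl, hb⟩)
    exact ⟨0, 0, le_rfl, mv1 (by omega) (by omega), Or.inl ⟨rfl, rfl⟩⟩
  | 1, hab =>
    have hb : b ≠ 1 := fun hb => h (Or.inr ⟨0, by omega, by omega⟩)
    exact ⟨1, 1, le_rfl, mv1 (by omega) (by omega), Or.inr ⟨0, by omega, by omega⟩⟩
  | (Nat.succ (Nat.succ a')), hab =>
    obtain ⟨m, hm, hcov⟩ := fl_cover (c := a' + 1) (by omega)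
    have hrep : a' + 2 = fl m + 1 ∨ a' + 2 = fl2 m + 1 := by omega
    have hne : ¬ TT 1 (a' + 2) b := fun hT => h (Or.inr hT)
    obtain ⟨x, y, hxy, hmv, hT⟩ := exists_tail (c := 1) (by omega) hab hm hrep hne
    exact ⟨x, y, hxy, hmv, Or.inr hT⟩

lemma exists1 {a b : ℕ} (hab : a ≤ b) (h0 : ¬ m0 a b) (h1 : ¬ m1 a b) :
    ∃ x y, x ≤ y ∧ FMove (a,b) (x,y) ∧ m1 x y := by
  have hfl0 := fl_zero
  have hfl20 := fl2_eq 0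
  have hfl1 := fl_one
  have hfl21 := fl2_eq 1
  match a, hab with
  | 0, _ =>
    have hb0 : b ≠ 0 := fun hb => h0 (Or.inl ⟨rfl, hb⟩)
    have hb1 : b ≠ 1 := fun hb => h1 (Or.inl ⟨rfl, hb⟩)
    exact ⟨0, 1, by omega, mv1 (by omega) (by omega), Or.inl ⟨rfl, rfl⟩⟩
  | 1, hab =>
    have hb : b ≠ 1 := fun hb => h0 (Or.inr ⟨0, by omega, by omega⟩)
    exact ⟨0, 1, by omega, mv3 hab (by omega), Or.inl ⟨rfl, rfl⟩⟩
  | 2, hab =>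
    have hb2 : b ≠ 2 := fun hb => h1 (Or.inr ⟨0, by omega, by omega⟩)
    have hb3 : b ≠ 3 := fun hb => h0 (Or.inr ⟨1, by omega, by omega⟩)
    exact ⟨2, 2, le_rfl, mv1 (by omega) (by omega), Or.inr ⟨0, by omega, by omega⟩⟩
  | (Nat.succ (Nat.succ (Nat.succ a'))), hab =>
    obtain ⟨m, hm, hcov⟩ := fl_cover (c := a' + 1) (by omega)
    have hrep : a' + 3 = fl m + 2 ∨ a' + 3 = fl2 m + 2 := by omega
    have hne : ¬ TT 2 (a' + 3) b := fun hT => h1 (Or.inr hT)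
    obtain ⟨x, y, hxy, hmv, hT⟩ := exists_tail (c := 2) (by omega) hab hm hrep hne
    exact ⟨x, y, hxy, hmv, Or.inr hT⟩

lemma exists2 {a b : ℕ} (hab : a ≤ b) (h0 : ¬ m0 a b) (h1 : ¬ m1 a b) (h2 : ¬ m2 a b) :
    ∃ x y, x ≤ y ∧ FMove (a,b) (x,y) ∧ m2 x y := by
  have hfl0 := fl_zero
  have hfl20 := fl2_eq 0
  match a, hab with
  | 0, _ =>
    have hb0 : b ≠ 0 := fun hb => h0 (Or.inl ⟨rfl, hb⟩)
    have hb1 : b ≠ 1 := fun hb => h1 (Or.inl ⟨rfl, hb⟩)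
    have hb2 : b ≠ 2 := fun hb => h2 (Or.inl ⟨rfl, hb⟩)
    exact ⟨0, 2, by omega, mv1 (by omega) (by omega), Or.inl ⟨rfl, rfl⟩⟩
  | 1, hab =>
    have hb1 : b ≠ 1 := fun hb => h0 (Or.inr ⟨0, by omega, by omega⟩)
    have hb3 : b ≠ 3 := fun hb => h2 (Or.inr (Or.inl ⟨rfl, hb⟩))
    rcases Nat.lt_or_ge b 3 with hb | hb
    · -- b = 2 : move to (0,2)
      have : b = 2 := by omega
      subst this
      exact ⟨0, 2, by omega, mv2 hab (by omega), Or.inl ⟨rfl, rfl⟩⟩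
    · -- b ≥ 4 : move to (1,3)
      exact ⟨1, 3, by omega, mv1 (by omega) (by omega), Or.inr (Or.inl ⟨rfl, rfl⟩)⟩
  | 2, hab =>
    exact ⟨0, 2, by omega, mv3 hab (by omega), Or.inl ⟨rfl, rfl⟩⟩
  | 3, hab =>
    exact ⟨1, 3, by omega, mv3 hab (by omega), Or.inr (Or.inl ⟨rfl, rfl⟩)⟩
  | 4, hab =>
    have hb4 : b ≠ 4 := fun hb => h2 (Or.inr (Or.inr ⟨0, by omega, by omega⟩))
    exact ⟨4, 4, le_rfl, mv1 (by omega) (by omega), Or.inr (Or.inr ⟨0, by omega, by omega⟩)⟩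
  | (Nat.succ (Nat.succ (Nat.succ (Nat.succ (Nat.succ a'))))), hab =>
    obtain ⟨m, hm, hcov⟩ := fl_cover (c := a' + 1) (by omega)
    have hrep : a' + 5 = fl m + 4 ∨ a' + 5 = fl2 m + 4 := by omega
    have hne : ¬ TT 4 (a' + 5) b := fun hT => h2 (Or.inr (Or.inr hT))
    obtain ⟨x, y, hxy, hmv, hT⟩ := exists_tail (c := 4) (by omega) hab hm hrep hne
    exact ⟨x, y, hxy, hmv, Or.inr (Or.inr hT)⟩

-- disjointness
lemma TT_TT_disj {c d a b : ℕ} (hcd : c ≠ d) (h1 : TT c a b) (h2 : TT d a b) : False := by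
  obtain ⟨n, hn1, hn2⟩ := h1
  obtain ⟨m, hm1, hm2⟩ := h2
  have := fl2_eq n; have := fl2_eq m
  have hnm : n = m := by omega
  subst hnm
  omega

lemma m0_not_m1 {a b : ℕ} (h0 : m0 a b) (h1 : m1 a b) : False := by
  rcases h0 with ⟨rfl, rfl⟩ | hT0
  · rcases h1 with ⟨h, _⟩ | hT1
    · omega
    · have := TT_le hT1; omega
  · rcases h1 with ⟨rfl, rfl⟩ | hT1
    · have := TT_le hT0; omega
    · exact TT_TT_disj (by omega) hT0 hT1

lemma m0_not_m2 {a b : ℕ} (h0 : m0 a b) (h2 : m2 a b) : False := by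
  rcases h0 with ⟨rfl, rfl⟩ | hT0
  · rcases h2 with ⟨_, h⟩ | ⟨h, _⟩ | hT2
    · omega
    · omega
    · have := TT_le hT2; omega
  · rcases h2 with ⟨rfl, rfl⟩ | ⟨rfl, rfl⟩ | hT2
    · have := TT_le hT0; omega
    · obtain ⟨n, hn1, hn2⟩ := hT0
      have := fl2_eq n
      have := fl_ge n
      omega
    · exact TT_TT_disj (by omega) hT0 hT2

lemma m1_not_m2 {a b : ℕ} (h1 : m1 a b) (h2 : m2 a b) : False := by
  rcases h1 with ⟨rfl, rfl⟩ | hT1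
  · rcases h2 with ⟨_, h⟩ | ⟨h, _⟩ | hT2
    · omega
    · omega
    · have := TT_le hT2; omega
  · rcases h2 with ⟨rfl, rfl⟩ | ⟨rfl, rfl⟩ | hT2
    · have := TT_le hT1; omega
    · have := TT_le hT1; omega
    · exact TT_TT_disj (by omega) hT1 hT2

/- ## Lifting to unordered positions -/

def inS0 (p : ℕ × ℕ) : Prop := m0 p.1 p.2 ∨ m0 p.2 p.1
def inS1 (p : ℕ × ℕ) : Prop := m1 p.1 p.2 ∨ m1 p.2 p.1
def inS2 (p : ℕ × ℕ) : Prop := m2 p.1 p.2 ∨ m2 p.2 p.1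

lemma fmove_swap_left {a b : ℕ} {q : ℕ × ℕ} (h : FMove (a,b) q) : FMove (b,a) q := by
  obtain ⟨a', b', x', y', h1, h2, h3, h4, h5⟩ := h
  refine ⟨a', b', x', y', h1, h2, ?_, h4, h5⟩
  simp only [Prod.ext_iff] at h3 ⊢
  tauto

lemma fmove_swap_right {p : ℕ × ℕ} {x y : ℕ} (h : FMove p (x,y)) : FMove p (y,x) := by
  obtain ⟨a', b', x', y', h1, h2, h3, h4, h5⟩ := h
  refine ⟨a', b', x', y', h1, h2, h3, ?_, h5⟩
  simp only [Prod.ext_iff] at h4 ⊢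
  tauto

lemma sorted_rep (p : ℕ × ℕ) : ∃ a b : ℕ, a ≤ b ∧ (p = (a,b) ∨ p = (b,a)) := by
  rcases le_total p.1 p.2 with h | h
  · exact ⟨p.1, p.2, h, Or.inl Prod.mk.eta.symm⟩
  · exact ⟨p.2, p.1, h, Or.inr Prod.mk.eta.symm⟩

lemma fmove_congr_left {p : ℕ × ℕ} {a b : ℕ} (h : p = (a,b) ∨ p = (b,a)) {q : ℕ × ℕ} :
    FMove p q ↔ FMove (a,b) q := by
  rcases h with rfl | rfl
  · exact Iff.rfl
  · exact ⟨fmove_swap_left, fmove_swap_left⟩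

lemma fmove_congr_right {p q : ℕ × ℕ} {x y : ℕ} (h : q = (x,y) ∨ q = (y,x)) :
    FMove p q ↔ FMove p (x,y) := by
  rcases h with rfl | rfl
  · exact Iff.rfl
  · exact ⟨fmove_swap_right, fmove_swap_right⟩

lemma lift_iff {mm : ℕ → ℕ → Prop} (hle : ∀ a b, mm a b → a ≤ b) {p : ℕ × ℕ} {a b : ℕ}
    (hr : p = (a,b) ∨ p = (b,a)) (hab : a ≤ b) :
    (mm p.1 p.2 ∨ mm p.2 p.1) ↔ mm a b := by
  rcases hr with rfl | rfl
  · constructor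
    · rintro (h | h)
      · exact h
      · have : a = b := le_antisymm hab (hle _ _ h)
        subst this; exact h
    · exact Or.inl
  · constructor
    · rintro (h | h)
      · have : a = b := le_antisymm hab (hle _ _ h)
        subst this; exact h
      · exact h
    · exact Or.inr

lemma L0 {p q : ℕ × ℕ} (hp : inS0 p) (hmv : FMove p q) (hq : inS0 q) : False := by
  obtain ⟨a, b, hab, hr⟩ := sorted_rep p
  obtain ⟨x, y, hxy, hr2⟩ := sorted_rep q
  have hm := (lift_iff (fun _ _ h => m0_le h) hr hab).mp hp
  have hm2 := (lift_iff (fun _ _ h => m0_le h) hr2 hxy).mp hq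
  exact noMove0 hab hxy hm ((fmove_congr_right hr2).mp ((fmove_congr_left hr).mp hmv)) hm2

lemma L1 {p q : ℕ × ℕ} (hp : inS1 p) (hmv : FMove p q) (hq : inS1 q) : False := by
  obtain ⟨a, b, hab, hr⟩ := sorted_rep p
  obtain ⟨x, y, hxy, hr2⟩ := sorted_rep q
  have hm := (lift_iff (fun _ _ h => m1_le h) hr hab).mp hp
  have hm2 := (lift_iff (fun _ _ h => m1_le h) hr2 hxy).mp hq
  exact noMove1 hab hxy hm ((fmove_congr_right hr2).mp ((fmove_congr_left hr).mp hmv)) hm2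

lemma L2 {p q : ℕ × ℕ} (hp : inS2 p) (hmv : FMove p q) (hq : inS2 q) : False := by
  obtain ⟨a, b, hab, hr⟩ := sorted_rep p
  obtain ⟨x, y, hxy, hr2⟩ := sorted_rep q
  have hm := (lift_iff (fun _ _ h => m2_le h) hr hab).mp hp
  have hm2 := (lift_iff (fun _ _ h => m2_le h) hr2 hxy).mp hq
  exact noMove2 hab hxy hm ((fmove_congr_right hr2).mp ((fmove_congr_left hr).mp hmv)) hm2

lemma E0 {p : ℕ × ℕ} (hp : ¬ inS0 p) : ∃ q, FMove p q ∧ inS0 q := by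
  obtain ⟨a, b, hab, hr⟩ := sorted_rep p
  have hm : ¬ m0 a b := fun h => hp ((lift_iff (fun _ _ h => m0_le h) hr hab).mpr h)
  obtain ⟨x, y, _, hmv, h⟩ := exists0 hab hm
  exact ⟨(x,y), (fmove_congr_left hr).mpr hmv, Or.inl h⟩

lemma E1 {p : ℕ × ℕ} (hp0 : ¬ inS0 p) (hp1 : ¬ inS1 p) : ∃ q, FMove p q ∧ inS1 q := by
  obtain ⟨a, b, hab, hr⟩ := sorted_rep p
  have hm0 : ¬ m0 a b := fun h => hp0 ((lift_iff (fun _ _ h => m0_le h) hr hab).mpr h)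
  have hm1 : ¬ m1 a b := fun h => hp1 ((lift_iff (fun _ _ h => m1_le h) hr hab).mpr h)
  obtain ⟨x, y, _, hmv, h⟩ := exists1 hab hm0 hm1
  exact ⟨(x,y), (fmove_congr_left hr).mpr hmv, Or.inl h⟩

lemma E2 {p : ℕ × ℕ} (hp0 : ¬ inS0 p) (hp1 : ¬ inS1 p) (hp2 : ¬ inS2 p) :
    ∃ q, FMove p q ∧ inS2 q := by
  obtain ⟨a, b, hab, hr⟩ := sorted_rep p
  have hm0 : ¬ m0 a b := fun h => hp0 ((lift_iff (fun _ _ h => m0_le h) hr hab).mpr h)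
  have hm1 : ¬ m1 a b := fun h => hp1 ((lift_iff (fun _ _ h => m1_le h) hr hab).mpr h)
  have hm2 : ¬ m2 a b := fun h => hp2 ((lift_iff (fun _ _ h => m2_le h) hr hab).mpr h)
  obtain ⟨x, y, _, hmv, h⟩ := exists2 hab hm0 hm1 hm2
  exact ⟨(x,y), (fmove_congr_left hr).mpr hmv, Or.inl h⟩

lemma inS0_not_inS1 {p : ℕ × ℕ} (h0 : inS0 p) (h1 : inS1 p) : False := by
  obtain ⟨a, b, hab, hr⟩ := sorted_rep p
  exact m0_not_m1 ((lift_iff (fun _ _ h => m0_le h) hr hab).mp h0)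
    ((lift_iff (fun _ _ h => m1_le h) hr hab).mp h1)

lemma inS0_not_inS2 {p : ℕ × ℕ} (h0 : inS0 p) (h2 : inS2 p) : False := by
  obtain ⟨a, b, hab, hr⟩ := sorted_rep p
  exact m0_not_m2 ((lift_iff (fun _ _ h => m0_le h) hr hab).mp h0)
    ((lift_iff (fun _ _ h => m2_le h) hr hab).mp h2)

lemma inS1_not_inS2 {p : ℕ × ℕ} (h1 : inS1 p) (h2 : inS2 p) : False := by
  obtain ⟨a, b, hab, hr⟩ := sorted_rep p
  exact m1_not_m2 ((lift_iff (fun _ _ h => m1_le h) hr hab).mp h1)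
    ((lift_iff (fun _ _ h => m2_le h) hr hab).mp h2)

/- ## Grundy values -/

lemma grundy_def (p : ℕ × ℕ) :
    grundy p = sInf {g : ℕ | ∀ q, FMove p q → grundy q ≠ g} := by
  rw [grundy]

lemma grundy_le : ∀ N : ℕ, ∀ p : ℕ × ℕ, p.1 + p.2 ≤ N → grundy p ≤ p.1 + p.2 := by
  intro N
  induction N with
  | zero =>
    intro p hp
    rw [grundy_def]
    apply Nat.sInf_le
    intro q hq
    exact absurd (fMove_lt hq) (by omega)
  | succ N ih =>
    intro p hp
    rw [grundy_def]
    apply Nat.sInf_le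
    intro q hq
    have h1 := fMove_lt hq
    have h2 := ih q (by omega)
    omega

lemma grundy_main : ∀ N : ℕ, ∀ p : ℕ × ℕ, p.1 + p.2 ≤ N →
    ((grundy p = 0 ↔ inS0 p) ∧ (grundy p = 1 ↔ inS1 p) ∧ (grundy p = 2 ↔ inS2 p)) := by
  intro N
  induction N using Nat.strong_induction_on with
  | _ N ih =>
  intro p hp
  have IH : ∀ q : ℕ × ℕ, FMove p q →
      ((grundy q = 0 ↔ inS0 q) ∧ (grundy q = 1 ↔ inS1 q) ∧ (grundy q = 2 ↔ inS2 q)) := by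
    intro q hq
    have := fMove_lt hq
    exact ih (q.1 + q.2) (by omega) q le_rfl
  have hnonempty : {g : ℕ | ∀ q, FMove p q → grundy q ≠ g}.Nonempty := by
    refine ⟨p.1 + p.2, fun q hq => ?_⟩
    have h1 := fMove_lt hq
    have h2 := grundy_le (q.1 + q.2) q le_rfl
    omega
  have hmem := Nat.sInf_mem hnonempty
  by_cases hp0 : inS0 p
  · have h0 : (0:ℕ) ∈ {g : ℕ | ∀ q, FMove p q → grundy q ≠ g} := by
      intro q hq he
      exact L0 hp0 hq ((IH q hq).1.mp he)
    have hg : grundy p = 0 := by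
      rw [grundy_def]
      exact Nat.le_zero.mp (Nat.sInf_le h0)
    refine ⟨iff_of_true hg hp0, iff_of_false (by omega) ?_, ?_⟩
    · exact fun h => inS0_not_inS1 hp0 h
    · exact iff_of_false (by rw [hg]; omega) (fun h => inS0_not_inS2 hp0 h)
  · by_cases hp1 : inS1 p
    · have h0 : (0:ℕ) ∉ {g : ℕ | ∀ q, FMove p q → grundy q ≠ g} := by
        intro hs
        obtain ⟨q, hq, hq0⟩ := E0 hp0
        exact hs q hq ((IH q hq).1.mpr hq0)
      have h1 : (1:ℕ) ∈ {g : ℕ | ∀ q, FMove p q → grundy q ≠ g} := by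
        intro q hq he
        exact L1 hp1 hq ((IH q hq).2.1.mp he)
      have hg : grundy p = 1 := by
        rw [grundy_def]
        have hle := Nat.sInf_le h1
        rcases Nat.lt_or_ge (sInf {g : ℕ | ∀ q, FMove p q → grundy q ≠ g}) 1 with h | h
        · exfalso
          have hz : sInf {g : ℕ | ∀ q, FMove p q → grundy q ≠ g} = 0 := by omega
          rw [hz] at hmem
          exact h0 hmem
        · omega
      refine ⟨iff_of_false (by rw [hg]; omega) hp0, iff_of_true hg hp1,
        iff_of_false (by rw [hg]; omega) (fun h => inS1_not_inS2 hp1 h)⟩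
    · by_cases hp2 : inS2 p
      · have h0 : (0:ℕ) ∉ {g : ℕ | ∀ q, FMove p q → grundy q ≠ g} := by
          intro hs
          obtain ⟨q, hq, hq0⟩ := E0 hp0
          exact hs q hq ((IH q hq).1.mpr hq0)
        have h1 : (1:ℕ) ∉ {g : ℕ | ∀ q, FMove p q → grundy q ≠ g} := by
          intro hs
          obtain ⟨q, hq, hq1⟩ := E1 hp0 hp1
          exact hs q hq ((IH q hq).2.1.mpr hq1)
        have h2 : (2:ℕ) ∈ {g : ℕ | ∀ q, FMove p q → grundy q ≠ g} := by
          intro q hq he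
          exact L2 hp2 hq ((IH q hq).2.2.mp he)
        have hg : grundy p = 2 := by
          have hle := Nat.sInf_le h2
          rw [grundy_def]
          rcases Nat.lt_or_ge (sInf {g : ℕ | ∀ q, FMove p q → grundy q ≠ g}) 2 with h | h
          · exfalso
            have hz : sInf {g : ℕ | ∀ q, FMove p q → grundy q ≠ g} = 0 ∨
                sInf {g : ℕ | ∀ q, FMove p q → grundy q ≠ g} = 1 := by omega
            rcases hz with hz | hz <;> rw [hz] at hmem
            · exact h0 hmem
            · exact h1 hmem
          · omega
        exact ⟨iff_of_false (by rw [hg]; omega) hp0, iff_of_false (by rw [hg]; omega) hp1,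
          iff_of_true hg hp2⟩
      · have h0 : (0:ℕ) ∉ {g : ℕ | ∀ q, FMove p q → grundy q ≠ g} := by
          intro hs
          obtain ⟨q, hq, hq0⟩ := E0 hp0
          exact hs q hq ((IH q hq).1.mpr hq0)
        have h1 : (1:ℕ) ∉ {g : ℕ | ∀ q, FMove p q → grundy q ≠ g} := by
          intro hs
          obtain ⟨q, hq, hq1⟩ := E1 hp0 hp1
          exact hs q hq ((IH q hq).2.1.mpr hq1)
        have h2 : (2:ℕ) ∉ {g : ℕ | ∀ q, FMove p q → grundy q ≠ g} := by
          intro hs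
          obtain ⟨q, hq, hq2⟩ := E2 hp0 hp1 hp2
          exact hs q hq ((IH q hq).2.2.mpr hq2)
        have hg0 : grundy p ≠ 0 := by
          rw [grundy_def]; intro h; rw [h] at hmem; exact h0 hmem
        have hg1 : grundy p ≠ 1 := by
          rw [grundy_def]; intro h; rw [h] at hmem; exact h1 hmem
        have hg2 : grundy p ≠ 2 := by
          rw [grundy_def]; intro h; rw [h] at hmem; exact h2 hmem
        exact ⟨iff_of_false hg0 hp0, iff_of_false hg1 hp1, iff_of_false hg2 hp2⟩


theorem stmt15 (p : ℕ × ℕ) :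
    grundy p = 2 ↔ p ∈ {p : ℕ × ℕ | p = (0, 2) ∨ p = (2, 0) ∨ p = (1, 3) ∨ p = (3, 1) ∨ ∃ n : ℕ, p = (fl n + 4, fl2 n + 4) ∨ p = (fl2 n + 4, fl n + 4)} := by
  have h := (grundy_main (p.1 + p.2) p le_rfl).2.2
  rw [h]
  simp only [Set.mem_setOf_eq, inS2, m2, TT, Prod.ext_iff]
  constructor
  · rintro ((⟨h1,h2⟩|⟨h1,h2⟩|⟨n,h1,h2⟩)|(⟨h1,h2⟩|⟨h1,h2⟩|⟨n,h1,h2⟩))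
    · exact Or.inl ⟨h1, h2⟩
    · exact Or.inr (Or.inr (Or.inl ⟨h1, h2⟩))
    · exact Or.inr (Or.inr (Or.inr (Or.inr ⟨n, Or.inl ⟨h1, h2⟩⟩)))
    · exact Or.inr (Or.inl ⟨h2, h1⟩)
    · exact Or.inr (Or.inr (Or.inr (Or.inl ⟨h2, h1⟩)))
    · exact Or.inr (Or.inr (Or.inr (Or.inr ⟨n, Or.inr ⟨h2, h1⟩⟩)))
  · rintro (⟨h1,h2⟩|⟨h1,h2⟩|⟨h1,h2⟩|⟨h1,h2⟩|⟨n,(⟨h1,h2⟩|⟨h1,h2⟩)⟩)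
    · exact Or.inl (Or.inl ⟨h1, h2⟩)
    · exact Or.inr (Or.inl ⟨h2, h1⟩)
    · exact Or.inl (Or.inr (Or.inl ⟨h1, h2⟩))
    · exact Or.inr (Or.inr (Or.inl ⟨h2, h1⟩))
    · exact Or.inl (Or.inr (Or.inr ⟨n, h1, h2⟩))
    · exact Or.inr (Or.inr (Or.inr ⟨n, h2, h1⟩))
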